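/- arXiv:1506.09128 — 3 statements merged into one kernel-verified Lean document; each statement's English description precedes it below -/
import Mathlib

section
/- Let f : ℝ → ℂ be a Schwartz function, let a, b be real numbers with 0 < a < b, and let n, k be nonnegative integers. Then there is a constant C > 0 (depending on f, a, b, n, k) such that for every s ∈ ℂ with a ≤ Re(s) ≤ b one has |s|^n · |(d/ds)^k f̃(s)| ≤ C, where (d/ds)^k f̃ denotes the k-th complex derivative of the Mellin transform f̃ of f. -/
open MeasureTheory Complex Set Filter Asymptotics Topology

namespace MellinStripAux

/-- iterated derivatives of a Schwartz function, as Schwartz functions -/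
noncomputable def fi (f : SchwartzMap ℝ ℂ) (i : ℕ) : SchwartzMap ℝ ℂ :=
  (SchwartzMap.derivCLM ℝ ℂ)^[i] f

lemma fi_succ (f : SchwartzMap ℝ ℂ) (i : ℕ) :
    fi f (i + 1) = SchwartzMap.derivCLM ℝ ℂ (fi f i) :=
  Function.iterate_succ_apply' _ _ _

/-- the generators `(log t)^j * t^m * f^{(i)}(t)` -/
noncomputable def gen (f : SchwartzMap ℝ ℂ) (j m i : ℕ) : ℝ → ℂ :=
  fun t => (Real.log t : ℂ) ^ j * (t : ℂ) ^ m * fi f i t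

lemma gen_succ (f : SchwartzMap ℝ ℂ) (j m i : ℕ) :
    gen f (j + 1) m i = fun t => Real.log t • gen f j m i t := by
  funext t
  simp only [gen, Complex.real_smul, pow_succ]
  ring

/-- the class of functions generated by the `gen`s under addition and scalar multiplication -/
inductive Nice (f : SchwartzMap ℝ ℂ) : (ℝ → ℂ) → Prop
  | gen (j m i : ℕ) : Nice f (gen f j m i)
  | add {h₁ h₂ : ℝ → ℂ} : Nice f h₁ → Nice f h₂ → Nice f (fun t => h₁ t + h₂ t)
  | smul (c : ℂ) {h : ℝ → ℂ} : Nice f h → Nice f (fun t => c * h t)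

lemma schwartz_bound (g : SchwartzMap ℝ ℂ) : ∃ C, ∀ x, ‖g x‖ ≤ C := by
  obtain ⟨C, -, hC⟩ := g.decay 0 0
  exact ⟨C, fun x => by simpa using hC x⟩

lemma schwartz_isBigO_top (g : SchwartzMap ℝ ℂ) (A : ℝ) :
    (fun t : ℝ => g t) =O[atTop] (fun t : ℝ => t ^ (-A)) := by
  obtain ⟨C, hCpos, hC⟩ := g.decay ⌈A⌉₊ 0
  rw [isBigO_iff]
  refine ⟨C, ?_⟩
  filter_upwards [eventually_ge_atTop (1:ℝ)] with t ht
  have ht0 : 0 < t := lt_of_lt_of_le one_pos ht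
  have h1 := hC t
  simp only [norm_iteratedFDeriv_zero] at h1
  have h2 : ‖g t‖ ≤ C * t ^ (-(⌈A⌉₊ : ℝ)) := by
    rw [Real.rpow_neg ht0.le, Real.rpow_natCast, mul_comm C, ← div_eq_inv_mul,
      le_div_iff₀ (by positivity)]
    calc ‖g t‖ * t ^ ⌈A⌉₊ = ‖t‖ ^ ⌈A⌉₊ * ‖g t‖ := by
          rw [Real.norm_eq_abs, abs_of_pos ht0]; ring
      _ ≤ C := h1
  refine h2.trans ?_
  have h3 : t ^ (-(⌈A⌉₊ : ℝ)) ≤ t ^ (-A) :=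
    Real.rpow_le_rpow_of_exponent_le ht (neg_le_neg (Nat.le_ceil A))
  have h4 : ‖t ^ (-A)‖ = t ^ (-A) := by
    rw [Real.norm_eq_abs, abs_of_pos (Real.rpow_pos_of_pos ht0 _)]
  rw [h4]
  exact mul_le_mul_of_nonneg_left h3 hCpos.le

lemma gen_isBigO_top (f : SchwartzMap ℝ ℂ) (j m i : ℕ) (A : ℝ) :
    gen f j m i =O[atTop] (fun t : ℝ => t ^ (-A)) := by
  induction j generalizing A with
  | zero =>
      have h1 : (fun t : ℝ => (t : ℂ) ^ m) =O[atTop] (fun t : ℝ => t ^ (m : ℝ)) := by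
        rw [isBigO_iff]
        refine ⟨1, ?_⟩
        filter_upwards [eventually_ge_atTop (0:ℝ)] with t ht
        rw [norm_pow, Complex.norm_real, Real.norm_eq_abs, Real.norm_eq_abs,
          _root_.abs_of_nonneg ht, _root_.abs_of_nonneg (Real.rpow_nonneg ht _),
          Real.rpow_natCast, one_mul]
      have h2 := schwartz_isBigO_top (fi f i) (A + m)
      have h3 := h1.mul h2
      refine h3.congr' (Eventually.of_forall fun t => ?_) ?_
      · simp [gen]
      · filter_upwards [eventually_gt_atTop (0:ℝ)] with t ht
        rw [← Real.rpow_add ht]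
        congr 1
        ring
  | succ j ih =>
      rw [gen_succ]
      exact isBigO_rpow_top_log_smul (by linarith : A < A + 1) (ih (A + 1))

lemma gen_isBigO_zero (f : SchwartzMap ℝ ℂ) (j m i : ℕ) {ε : ℝ} (hε : 0 < ε) :
    gen f j m i =O[𝓝[>] 0] (fun t : ℝ => t ^ (-ε)) := by
  induction j generalizing ε with
  | zero =>
      obtain ⟨C, hC⟩ := schwartz_bound (fi f i)
      have hC0 : 0 ≤ C := (norm_nonneg _).trans (hC 0)
      rw [isBigO_iff]
      refine ⟨C, ?_⟩
      filter_upwards [Ioc_mem_nhdsGT_of_mem (Set.mem_Ico.mpr ⟨le_refl (0:ℝ), one_pos⟩)]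
        with t ht
      obtain ⟨ht0, ht1⟩ := ht
      have h1 : ‖gen f 0 m i t‖ ≤ C := by
        simp only [gen, pow_zero, one_mul, norm_mul, norm_pow, Complex.norm_real,
          Real.norm_eq_abs, _root_.abs_of_pos ht0]
        calc t ^ m * ‖fi f i t‖ ≤ 1 * C :=
              mul_le_mul (pow_le_one₀ ht0.le ht1) (hC t) (norm_nonneg _) one_pos.le
          _ = C := one_mul C
      refine h1.trans ?_
      have h2 : (1:ℝ) ≤ t ^ (-ε) :=
        Real.one_le_rpow_of_pos_of_le_one_of_nonpos ht0 ht1 (by linarith)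
      rw [Real.norm_eq_abs, _root_.abs_of_pos (Real.rpow_pos_of_pos ht0 _)]
      nlinarith
  | succ j ih =>
      rw [gen_succ]
      exact isBigO_rpow_zero_log_smul (by linarith : ε / 2 < ε) (ih (by linarith))

lemma nice_isBigO_top (f : SchwartzMap ℝ ℂ) {h : ℝ → ℂ} (hh : Nice f h) (A : ℝ) :
    h =O[atTop] (fun t : ℝ => t ^ (-A)) := by
  induction hh with
  | gen j m i => exact gen_isBigO_top f j m i A
  | add h₁ h₂ ih₁ ih₂ => exact ih₁.add ih₂
  | smul c h ih => exact ih.const_mul_left c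

lemma nice_isBigO_zero (f : SchwartzMap ℝ ℂ) {h : ℝ → ℂ} (hh : Nice f h) {ε : ℝ} (hε : 0 < ε) :
    h =O[𝓝[>] 0] (fun t : ℝ => t ^ (-ε)) := by
  induction hh with
  | gen j m i => exact gen_isBigO_zero f j m i hε
  | add h₁ h₂ ih₁ ih₂ => exact ih₁.add ih₂
  | smul c h ih => exact ih.const_mul_left c

lemma nice_contOn (f : SchwartzMap ℝ ℂ) {h : ℝ → ℂ} (hh : Nice f h) :
    ContinuousOn h (Ioi 0) := by
  induction hh with
  | gen j m i =>
      apply ContinuousOn.mul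
      apply ContinuousOn.mul
      · exact ((Complex.continuous_ofReal.comp_continuousOn
          (Real.continuousOn_log.mono fun x hx => ne_of_gt hx)).pow j)
      · exact (Complex.continuous_ofReal.continuousOn.pow m)
      · exact (fi f i).continuous.continuousOn
  | add h₁ h₂ ih₁ ih₂ => exact ih₁.add ih₂
  | smul c h ih => exact ih.const_smul c

lemma nice_locInt (f : SchwartzMap ℝ ℂ) {h : ℝ → ℂ} (hh : Nice f h) :
    LocallyIntegrableOn h (Ioi 0) := by
  exact (nice_contOn f hh).locallyIntegrableOn measurableSet_Ioi

lemma nice_conv (f : SchwartzMap ℝ ℂ) {h : ℝ → ℂ} (hh : Nice f h) {s : ℂ} (hs : 0 < s.re) :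
    MellinConvergent h s :=
  mellinConvergent_of_isBigO_rpow (nice_locInt f hh)
    (nice_isBigO_top f hh (s.re + 1)) (by linarith)
    (nice_isBigO_zero f hh (by linarith : (0:ℝ) < s.re / 2)) (by linarith)

lemma pow_pred_mul {m : ℕ} {z : ℂ} (hz : z ≠ 0) :
    (m : ℂ) * z ^ (m - 1) = (m : ℂ) * z ^ m / z := by
  cases m with
  | zero => simp
  | succ m => rw [Nat.add_sub_cancel]; field_simp [pow_succ]; ring

lemma nice_deriv (f : SchwartzMap ℝ ℂ) {h : ℝ → ℂ} (hh : Nice f h) :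
    ∃ g : ℝ → ℂ, Nice f g ∧ ∀ t ∈ Set.Ioi (0:ℝ), HasDerivAt h (g t / t) t := by
  induction hh with
  | gen j m i =>
      refine ⟨fun t => (j : ℂ) * gen f (j-1) m i t +
          ((m : ℂ) * gen f j m i t + gen f j (m+1) (i+1) t),
        Nice.add (Nice.smul _ (Nice.gen _ _ _))
          (Nice.add (Nice.smul _ (Nice.gen _ _ _)) (Nice.gen _ _ _)), fun t ht => ?_⟩
      have ht0 : (0:ℝ) < t := ht
      have htc : (t : ℂ) ≠ 0 := Complex.ofReal_ne_zero.mpr ht0.ne'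
      have hu := ((Real.hasDerivAt_log ht0.ne').pow j).mul (hasDerivAt_pow m t)
      have hfi : HasDerivAt (fun x => fi f i x) (fi f (i+1) t) t := by
        have hd := ((fi f i).differentiableAt (x := t)).hasDerivAt
        rwa [show deriv (⇑(fi f i)) t = fi f (i+1) t by
          rw [fi_succ, SchwartzMap.derivCLM_apply]] at hd
      have h3 := hu.ofReal_comp.mul hfi
      have h4 : ((fun y : ℝ => (((Real.log ^ j * fun x : ℝ => x ^ m) y : ℝ) : ℂ)) *
          fun x => fi f i x) = gen f j m i := by
        funext x
        simp only [gen, Pi.mul_apply, Pi.pow_apply]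
        push_cast
        ring
      rw [h4] at h3
      convert h3 using 1
      · rfl
      simp only [gen, Pi.mul_apply, Pi.pow_apply]
      push_cast
      rw [pow_pred_mul (m := m) htc]
      field_simp
      ring
  | add h₁ h₂ ih₁ ih₂ =>
      obtain ⟨g₁, hg₁, hd₁⟩ := ih₁
      obtain ⟨g₂, hg₂, hd₂⟩ := ih₂
      refine ⟨fun t => g₁ t + g₂ t, Nice.add hg₁ hg₂, fun t ht => ?_⟩
      have := (hd₁ t ht).add (hd₂ t ht)
      rwa [← add_div] at this
  | smul c h ih =>
      obtain ⟨g, hg, hd⟩ := ih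
      refine ⟨fun t => c * g t, Nice.smul c hg, fun t ht => ?_⟩
      simpa [mul_div_assoc] using (hd t ht).const_mul c

lemma nice_ibp (f : SchwartzMap ℝ ℂ) {h g : ℝ → ℂ} (hh : Nice f h) (hg : Nice f g)
    (hder : ∀ t ∈ Set.Ioi (0:ℝ), HasDerivAt h (g t / t) t) {s : ℂ} (hs : 0 < s.re) :
    s * mellin h s + mellin g s = 0 := by
  set F : ℝ → ℂ := fun t => (t : ℂ) ^ s * h t with hF
  set G : ℝ → ℂ := fun t => (t : ℂ) ^ (s - 1) * (s * h t + g t) with hG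
  have hint1 : IntegrableOn (fun t : ℝ => (t : ℂ) ^ (s - 1) * h t) (Ioi 0) := by
    simpa [MellinConvergent, smul_eq_mul] using nice_conv f hh hs
  have hint2 : IntegrableOn (fun t : ℝ => (t : ℂ) ^ (s - 1) * g t) (Ioi 0) := by
    simpa [MellinConvergent, smul_eq_mul] using nice_conv f hg hs
  have hGeq : G = fun t : ℝ => s * ((t:ℂ) ^ (s-1) * h t) + (t:ℂ) ^ (s-1) * g t :=
    funext fun t => by simp only [hG]; ring
  have hGint : IntegrableOn G (Ioi 0) := by
    rw [hGeq]
    exact (hint1.const_mul s).add hint2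
  have hFderiv : ∀ t ∈ Ioi (0:ℝ), HasDerivAt F (G t) t := by
    intro t ht
    have ht0 : (0:ℝ) < t := ht
    have htc : (t : ℂ) ≠ 0 := Complex.ofReal_ne_zero.mpr ht0.ne'
    have h1 : HasDerivAt (fun x : ℝ => (x : ℂ) ^ s) (s * (t : ℂ) ^ (s - 1) * 1) t :=
      ((hasDerivAt_id ((t : ℝ) : ℂ)).cpow_const (Or.inl (by simpa using ht0))).comp_ofReal
    have h2 := h1.mul (hder t ht)
    convert h2 using 1
    · rfl
    · rfl
    have hts : (t : ℂ) ^ s = (t : ℂ) ^ (s - 1) * t := by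
      have : (t : ℂ) ^ s = (t : ℂ) ^ (s - 1) * (t : ℂ) ^ (1 : ℂ) := by
        rw [← Complex.cpow_add _ _ htc, sub_add_cancel]
      simpa [Complex.cpow_one] using this
    simp only [hG, hF, hts]
    field_simp
  have htop : Tendsto F atTop (𝓝 0) := by
    have h1 : (fun t : ℝ => ((t : ℂ) ^ s)) =O[atTop] (fun t : ℝ => t ^ s.re) := by
      rw [isBigO_iff]
      refine ⟨1, ?_⟩
      filter_upwards [eventually_gt_atTop (0:ℝ)] with t ht
      rw [Complex.norm_cpow_eq_rpow_re_of_pos ht, Real.norm_eq_abs,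
        _root_.abs_of_pos (Real.rpow_pos_of_pos ht _), one_mul]
    have h2 := h1.mul (nice_isBigO_top f hh (s.re + 1))
    have h3 : F =O[atTop] (fun t : ℝ => t ^ (-1 : ℝ)) := by
      refine h2.congr' (Eventually.of_forall fun t => rfl) ?_
      filter_upwards [eventually_gt_atTop (0:ℝ)] with t ht
      rw [← Real.rpow_add ht]
      congr 1
      ring
    exact h3.trans_tendsto (tendsto_rpow_neg_atTop one_pos)
  have hzero : Tendsto F (𝓝[>] 0) (𝓝 0) := by
    have h1 : (fun t : ℝ => ((t : ℂ) ^ s)) =O[𝓝[>] 0] (fun t : ℝ => t ^ s.re) := by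
      rw [isBigO_iff]
      refine ⟨1, ?_⟩
      filter_upwards [self_mem_nhdsWithin] with t ht
      rw [Complex.norm_cpow_eq_rpow_re_of_pos ht, Real.norm_eq_abs,
        _root_.abs_of_pos (Real.rpow_pos_of_pos ht _), one_mul]
    have h2 := h1.mul (nice_isBigO_zero f hh (show (0:ℝ) < s.re / 2 by linarith))
    have h3 : F =O[𝓝[>] 0] (fun t : ℝ => t ^ (s.re / 2)) := by
      refine h2.congr' (Eventually.of_forall fun t => rfl) ?_
      filter_upwards [self_mem_nhdsWithin] with t ht
      rw [← Real.rpow_add ht]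
      congr 1
      ring
    have h4 : Tendsto (fun t : ℝ => t ^ (s.re / 2)) (𝓝[>] 0) (𝓝 0) := by
      have hc : ContinuousAt (fun t : ℝ => t ^ (s.re / 2)) 0 :=
        Real.continuousAt_rpow_const 0 _ (Or.inr (by linarith))
      have := hc.continuousWithinAt (s := Ioi (0:ℝ))
      rw [ContinuousWithinAt, Real.zero_rpow (by linarith)] at this
      exact this
    exact h3.trans_tendsto h4
  have key : ∀ x ∈ Ioi (0:ℝ), ∫ t in Ioi x, G t = -F x := by
    intro x hx
    have := integral_Ioi_of_hasDerivAt_of_tendsto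
      (f := F) (f' := G) (a := x) (m := 0)
      ((hFderiv x hx).continuousAt.continuousWithinAt)
      (fun t ht => hFderiv t (show (0:ℝ) < t from lt_trans hx ht))
      (hGint.mono_set (Ioi_subset_Ioi hx.le)) htop
    rw [this, zero_sub]
  have hunion : (⋃ n : ℕ, Ioi ((n + 1 : ℝ)⁻¹)) = Ioi (0:ℝ) := by
    ext x
    simp only [mem_iUnion, mem_Ioi]
    constructor
    · rintro ⟨n, hn⟩
      exact lt_trans (by positivity) hn
    · intro hx
      obtain ⟨n, hn⟩ := exists_nat_gt x⁻¹
      exact ⟨n, by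
        rw [inv_lt_comm₀ (by positivity) hx]
        calc x⁻¹ < n := hn
          _ ≤ n + 1 := by linarith⟩
  have hmono : Monotone (fun n : ℕ => Ioi ((n + 1 : ℝ)⁻¹)) := by
    intro p q hpq
    apply Ioi_subset_Ioi
    apply inv_anti₀ (by positivity)
    exact_mod_cast by exact_mod_cast add_le_add_left (Nat.cast_le.mpr hpq) 1
  have hlim1 : Tendsto (fun n : ℕ => ∫ t in Ioi ((n + 1 : ℝ)⁻¹), G t) atTop
      (𝓝 (∫ t in Ioi (0:ℝ), G t)) := by
    have := tendsto_setIntegral_of_monotone (f := G) (μ := volume)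
      (fun n : ℕ => measurableSet_Ioi) hmono (by rw [hunion]; exact hGint)
    rwa [hunion] at this
  have hseq : Tendsto (fun n : ℕ => ((n + 1 : ℝ)⁻¹)) atTop (𝓝[>] 0) := by
    rw [tendsto_nhdsWithin_iff]
    constructor
    · have := tendsto_one_div_add_atTop_nhds_zero_nat (𝕜 := ℝ)
      simpa [one_div] using this
    · exact Eventually.of_forall fun n => by
        simp only [Set.mem_Ioi]
        positivity
  have hlim2 : Tendsto (fun n : ℕ => ∫ t in Ioi ((n + 1 : ℝ)⁻¹), G t) atTop (𝓝 0) := by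
    have h5 : Tendsto (fun n : ℕ => -F ((n + 1 : ℝ)⁻¹)) atTop (𝓝 (-0)) :=
      (hzero.comp hseq).neg
    rw [neg_zero] at h5
    refine h5.congr fun n => ?_
    rw [key _ (Set.mem_Ioi.mpr (by positivity : (0:ℝ) < ((n:ℝ) + 1)⁻¹))]
  have hzero' : ∫ t in Ioi (0:ℝ), G t = 0 := tendsto_nhds_unique hlim1 hlim2
  have hexp : ∫ t in Ioi (0:ℝ), G t = s * mellin h s + mellin g s := by
    rw [hGeq, integral_add (hint1.const_mul s) hint2]
    have hsm : ∫ a in Ioi (0:ℝ), s * ((a:ℂ) ^ (s-1) * h a) =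
        s * ∫ a in Ioi (0:ℝ), (a:ℂ) ^ (s-1) * h a := by
      simpa [smul_eq_mul] using
        integral_smul (μ := volume.restrict (Ioi 0)) s (fun a : ℝ => (a:ℂ) ^ (s-1) * h a)
    rw [hsm]
    simp [mellin, smul_eq_mul]
  rw [← hexp, hzero']

lemma nice_pow_mul (f : SchwartzMap ℝ ℂ) (n : ℕ) {h : ℝ → ℂ} (hh : Nice f h) :
    ∃ g : ℝ → ℂ, Nice f g ∧ ∀ s : ℂ, 0 < s.re → s ^ n * mellin h s = mellin g s := by
  induction n with
  | zero => exact ⟨h, hh, fun s _ => by simp⟩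
  | succ n ih =>
      obtain ⟨g, hgN, hgid⟩ := ih
      obtain ⟨g', hg'N, hder⟩ := nice_deriv f hgN
      refine ⟨fun t => (-1 : ℂ) * g' t, Nice.smul _ hg'N, fun s hs => ?_⟩
      have h1 := nice_ibp f hgN hg'N hder hs
      have h2 : mellin (fun t => (-1 : ℂ) * g' t) s = (-1 : ℂ) * mellin g' s := by
        simpa [smul_eq_mul] using mellin_const_smul g' s (-1 : ℂ)
      rw [h2, pow_succ, mul_comm (s ^ n) s, mul_assoc, hgid s hs]
      linear_combination h1

lemma iter_deriv_mellin (f : SchwartzMap ℝ ℂ) (k : ℕ) :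
    ∀ s : ℂ, 0 < s.re → iteratedDeriv k (mellin (⇑f)) s = mellin (gen f k 0 0) s := by
  induction k with
  | zero =>
      intro s _
      rw [iteratedDeriv_zero]
      congr 1
      funext t
      simp [gen, fi]
  | succ k ih =>
      intro s hs
      rw [iteratedDeriv_succ]
      have hopen : IsOpen {z : ℂ | 0 < z.re} := isOpen_lt continuous_const Complex.continuous_re
      have hev : iteratedDeriv k (mellin (⇑f)) =ᶠ[𝓝 s] mellin (gen f k 0 0) :=
        eventually_of_mem (hopen.mem_nhds hs) fun z hz => ih z hz
      rw [hev.deriv_eq]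
      have hd := (mellin_hasDerivAt_of_isBigO_rpow
        (nice_locInt f (Nice.gen k 0 0))
        (nice_isBigO_top f (Nice.gen k 0 0) (s.re + 1)) (by linarith)
        (nice_isBigO_zero f (Nice.gen k 0 0) (show (0:ℝ) < s.re / 2 by linarith))
        (by linarith)).2
      rw [hd.deriv, ← gen_succ]

lemma nice_bound (f : SchwartzMap ℝ ℂ) {g : ℝ → ℂ} (hg : Nice f g) (a b : ℝ) (ha : 0 < a)
    (hab : a ≤ b) :
    ∃ C > 0, ∀ s : ℂ, a ≤ s.re → s.re ≤ b → ‖mellin g s‖ ≤ C := by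
  have hconva : IntegrableOn (fun t : ℝ => (t:ℂ) ^ ((a:ℂ) - 1) * g t) (Ioi 0) := by
    simpa [MellinConvergent, smul_eq_mul] using nice_conv f hg (s := (a:ℂ)) (by simpa using ha)
  have hconvb : IntegrableOn (fun t : ℝ => (t:ℂ) ^ ((b:ℂ) - 1) * g t) (Ioi 0) := by
    simpa [MellinConvergent, smul_eq_mul] using nice_conv f hg (s := (b:ℂ)) (by simpa using lt_of_lt_of_le ha hab)
  set D : ℝ → ℝ := fun t => (t ^ (a - 1) + t ^ (b - 1)) * ‖g t‖ with hD
  have hnorm : ∀ (c : ℝ), 0 < c → ∀ t ∈ Ioi (0:ℝ),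
      ‖(t:ℂ) ^ ((c:ℂ) - 1) * g t‖ = t ^ (c - 1) * ‖g t‖ := by
    intro c _ t ht
    rw [norm_mul, Complex.norm_cpow_eq_rpow_re_of_pos ht]
    norm_num
  have hDint : IntegrableOn D (Ioi 0) := by
    have h1 : IntegrableOn (fun t : ℝ => t ^ (a - 1) * ‖g t‖) (Ioi 0) := by
      exact IntegrableOn.congr_fun hconva.norm (fun t ht => hnorm a ha t ht) measurableSet_Ioi
    have h2 : IntegrableOn (fun t : ℝ => t ^ (b - 1) * ‖g t‖) (Ioi 0) := by
      exact IntegrableOn.congr_fun hconvb.norm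
        (fun t ht => hnorm b (lt_of_lt_of_le ha hab) t ht) measurableSet_Ioi
    have h3 : D = fun t => t ^ (a - 1) * ‖g t‖ + t ^ (b - 1) * ‖g t‖ :=
      funext fun t => by simp only [hD]; ring
    rw [h3]
    exact h1.add h2
  set C := ∫ t in Ioi (0:ℝ), D t with hC
  have hC0 : 0 ≤ C := by
    refine setIntegral_nonneg measurableSet_Ioi fun t ht => ?_
    have ht0 : (0:ℝ) < t := ht
    have : (0:ℝ) ≤ t ^ (a-1) + t ^ (b-1) := by positivity
    exact mul_nonneg this (norm_nonneg _)
  refine ⟨C + 1, by linarith, fun s hsa hsb => ?_⟩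
  have hs : 0 < s.re := lt_of_lt_of_le ha hsa
  have hint : IntegrableOn (fun t : ℝ => (t:ℂ) ^ (s - 1) * g t) (Ioi 0) := by
    simpa [MellinConvergent, smul_eq_mul] using nice_conv f hg hs
  calc ‖mellin g s‖ ≤ ∫ t in Ioi (0:ℝ), ‖(t:ℂ) ^ (s-1) * g t‖ := by
        simpa [mellin, smul_eq_mul] using norm_integral_le_integral_norm
          (μ := volume.restrict (Ioi 0)) (fun t : ℝ => (t:ℂ) ^ (s-1) * g t)
    _ ≤ ∫ t in Ioi (0:ℝ), D t := by
        refine setIntegral_mono_on hint.norm hDint measurableSet_Ioi fun t ht => ?_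
        have ht0 : (0:ℝ) < t := ht
        rw [norm_mul, Complex.norm_cpow_eq_rpow_re_of_pos ht0,
          Complex.sub_re, Complex.one_re]
        simp only [hD]
        rcases le_total t 1 with h1 | h1
        · have : t ^ (s.re - 1) ≤ t ^ (a - 1) :=
            Real.rpow_le_rpow_of_exponent_ge ht0 h1 (by linarith)
          nlinarith [Real.rpow_nonneg ht0.le (b-1), norm_nonneg (g t),
            Real.rpow_nonneg ht0.le (s.re - 1)]
        · have : t ^ (s.re - 1) ≤ t ^ (b - 1) :=
            Real.rpow_le_rpow_of_exponent_le h1 (by linarith)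
          nlinarith [Real.rpow_nonneg ht0.le (a-1), norm_nonneg (g t),
            Real.rpow_nonneg ht0.le (s.re - 1)]
    _ = C := rfl
    _ ≤ C + 1 := by linarith

end MellinStripAux

open MellinStripAux

/-- For a Schwartz function `f : ℝ → ℂ`, reals `0 < a < b` and naturals
`n, k`, there is a constant `C > 0` such that for every `s ∈ ℂ` with `a ≤ Re s ≤ b` one has
`|s|^n * |(d/ds)^k f̃(s)| ≤ C`, where `f̃ = mellin f` is the Mellin transform of `f` and
`(d/ds)^k` is the `k`-th complex derivative. -/
theorem mellin_schwartz_vertical_strip_bound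
    (f : SchwartzMap ℝ ℂ) (a b : ℝ) (ha : 0 < a) (hab : a < b) (n k : ℕ) :
    ∃ C > 0, ∀ s : ℂ, a ≤ s.re → s.re ≤ b →
      ‖s‖ ^ n * ‖iteratedDeriv k (mellin (⇑f)) s‖ ≤ C := by
  obtain ⟨g, hgN, hgid⟩ := nice_pow_mul f n (Nice.gen k 0 0)
  obtain ⟨C, hC0, hC⟩ := nice_bound f hgN a b ha hab.le
  refine ⟨C, hC0, fun s hsa hsb => ?_⟩
  have hs : 0 < s.re := lt_of_lt_of_le ha hsa
  calc ‖s‖ ^ n * ‖iteratedDeriv k (mellin (⇑f)) s‖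
      = ‖s ^ n * mellin (gen f k 0 0) s‖ := by
        rw [iter_deriv_mellin f k s hs, norm_mul, norm_pow]
    _ = ‖mellin g s‖ := by rw [hgid s hs]
    _ ≤ C := hC s hsa hsb
end

section
/- Let f : ℝ → ℂ be a Schwartz function, let ε > 0 be a real number, and let n, k be nonnegative integers. Set g(x) = (log x)^k · f(x) for x > 0, and let D^n g denote the n-fold application of the Euler operator D h (x) = x · h′(x) to g. Then the function x ↦ x^{ε−1} · (D^n g)(x) is integrable on (0,∞) with respect to Lebesgue measure; equivalently, x ↦ x^{ε} (D^n g)(x) lies in L^1((0,∞), dx/x). -/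
open MeasureTheory

/-- The Euler operator `D h (x) = x * h'(x)`. -/
noncomputable def eulerD (h : ℝ → ℂ) : ℝ → ℂ := fun x => (x : ℂ) * deriv h x

open Set Filter Asymptotics Real

namespace EulerAux

/-- `x ↦ x • f' x`, as a Schwartz map. -/
noncomputable def M (f : SchwartzMap ℝ ℂ) : SchwartzMap ℝ ℂ :=
  SchwartzMap.bilinLeftCLM ((ContinuousLinearMap.lsmul ℝ ℝ : ℝ →L[ℝ] ℂ →L[ℝ] ℂ).flip)
    (ContinuousLinearMap.id ℝ ℝ).hasTemperateGrowth (SchwartzMap.derivCLM ℝ ℂ f)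

lemma M_apply (f : SchwartzMap ℝ ℂ) (x : ℝ) : M f x = x • deriv f x := rfl

lemma M_zero : M 0 = 0 := by unfold M; rw [map_zero, map_zero]

lemma bigO_top (F : SchwartzMap ℝ ℂ) (j : ℕ) (a : ℝ) :
    (fun x : ℝ => (Real.log x) ^ j • F x) =O[atTop] (fun x : ℝ => x ^ (-a)) := by
  induction j generalizing a with
  | zero =>
    have h1 : (fun x : ℝ => F x) =O[cocompact ℝ] (fun x : ℝ => ‖x‖ ^ (-a)) :=
      SchwartzMap.isBigO_cocompact_rpow F (-a)
    have h2 : (fun x : ℝ => F x) =O[atTop] (fun x : ℝ => ‖x‖ ^ (-a)) :=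
      h1.mono (by rw [cocompact_eq_atBot_atTop]; exact le_sup_right)
    simp only [pow_zero, one_smul]
    refine h2.congr' (Eventually.of_forall fun x => rfl) ?_
    filter_upwards [eventually_ge_atTop (0:ℝ)] with x hx
    rw [Real.norm_of_nonneg hx]
  | succ j ih =>
    have h := isBigO_rpow_top_log_smul (show a < a + 1 by linarith) (ih (a + 1))
    refine h.congr' (Eventually.of_forall fun x => ?_) (Eventually.of_forall fun x => rfl)
    simp only [pow_succ, mul_comm, mul_smul]

lemma bigO_zero (F : SchwartzMap ℝ ℂ) (j : ℕ) {b : ℝ} (hb : 0 < b) :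
    (fun x : ℝ => (Real.log x) ^ j • F x) =O[nhdsWithin 0 (Ioi 0)] (fun x : ℝ => x ^ (-b)) := by
  induction j generalizing b with
  | zero =>
    have h1 : (fun x : ℝ => F x) =O[nhdsWithin 0 (Ioi 0)] (fun _ : ℝ => (1:ℝ)) := by
      refine IsBigO.of_bound (SchwartzMap.seminorm ℝ 0 0 F) ?_
      filter_upwards with x
      simpa using SchwartzMap.norm_le_seminorm ℝ F x
    have h2 : (fun _ : ℝ => (1:ℝ)) =O[nhdsWithin 0 (Ioi 0)] (fun x : ℝ => x ^ (-b)) := by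
      refine IsBigO.of_bound 1 ?_
      filter_upwards [Ioo_mem_nhdsGT_of_mem (show (0:ℝ) ∈ Ico 0 1 by simp)] with x hx
      have h3 : x ^ (0:ℝ) ≤ x ^ (-b) :=
        Real.rpow_le_rpow_of_exponent_ge hx.1 hx.2.le (by linarith)
      rw [Real.rpow_zero] at h3
      rw [one_mul, Real.norm_of_nonneg (Real.rpow_nonneg hx.1.le _), norm_one]
      exact h3
    simpa using h1.trans h2
  | succ j ih =>
    have h := isBigO_rpow_zero_log_smul (show b/2 < b by linarith) (ih (by linarith : 0 < b/2))
    refine h.congr' (Eventually.of_forall fun x => ?_) (Eventually.of_forall fun x => rfl)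
    simp only [pow_succ, mul_comm, mul_smul]

lemma key (F : SchwartzMap ℝ ℂ) {ε : ℝ} (hε : 0 < ε) (j : ℕ) :
    IntegrableOn (fun x : ℝ => x ^ (ε - 1) • ((Real.log x) ^ j • F x)) (Ioi 0) := by
  have hcont : ContinuousOn (fun x : ℝ => (Real.log x) ^ j • F x) (Ioi 0) := by
    refine ContinuousOn.smul (ContinuousOn.fun_pow (f := Real.log) ?_ j) F.continuous.continuousOn
    exact Real.continuousOn_log.mono fun x hx => ne_of_gt hx
  have hloc : LocallyIntegrableOn (fun x : ℝ => (Real.log x) ^ j • F x) (Ioi 0) :=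
    hcont.locallyIntegrableOn measurableSet_Ioi
  have h := mellinConvergent_of_isBigO_rpow (E := ℂ) (s := (ε : ℂ)) hloc
    (bigO_top F j (ε + 1)) (by simp only [Complex.ofReal_re]; linarith)
    (bigO_zero F j (show 0 < ε/2 by linarith)) (by simp only [Complex.ofReal_re]; linarith)
  refine h.congr_fun (fun x hx => ?_) measurableSet_Ioi
  have hx0 : (0:ℝ) < x := hx
  have : ((ε:ℂ) - 1) = ((ε - 1 : ℝ) : ℂ) := by push_cast; ring
  beta_reduce
  rw [this, ← Complex.ofReal_cpow hx0.le, Complex.real_smul]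
  rfl

lemma step (h : ℝ → ℂ) (K : ℕ) (F : ℕ → SchwartzMap ℝ ℂ) (hF : ∀ j, K ≤ j → F j = 0)
    (hh : ∀ x ∈ Ioi (0:ℝ), h x = ∑ j ∈ Finset.range K, (Real.log x) ^ j • F j x) :
    ∀ x ∈ Ioi (0:ℝ), eulerD h x
      = ∑ j ∈ Finset.range K, (Real.log x) ^ j • (((j:ℝ) + 1) • F (j+1) + M (F j)) x := by
  intro x hx
  have hx0 : (0:ℝ) < x := hx
  have hev : h =ᶠ[nhds x] fun y => ∑ j ∈ Finset.range K, (Real.log y) ^ j • F j y :=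
    eventually_of_mem (isOpen_Ioi.mem_nhds hx) hh
  have hderiv : HasDerivAt (fun y => ∑ j ∈ Finset.range K, (Real.log y) ^ j • F j y)
      (∑ j ∈ Finset.range K,
        ((Real.log x) ^ j • deriv (F j) x + ((j:ℝ) * (Real.log x) ^ (j-1) * x⁻¹) • F j x)) x := by
    refine HasDerivAt.fun_sum fun j _ => ?_
    have h1 : HasDerivAt (fun y : ℝ => (Real.log y) ^ j)
        ((j:ℝ) * (Real.log x) ^ (j-1) * x⁻¹) x :=
      (Real.hasDerivAt_log hx0.ne').pow j
    exact h1.smul ((F j).differentiable.differentiableAt.hasDerivAt)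
  have hdh : deriv h x = ∑ j ∈ Finset.range K,
      ((Real.log x) ^ j • deriv (F j) x + ((j:ℝ) * (Real.log x) ^ (j-1) * x⁻¹) • F j x) := by
    rw [hev.deriv_eq, hderiv.deriv]
  have hB0 : ∀ j : ℕ, K ≤ j → (((j:ℝ) * (Real.log x) ^ (j-1)) • F j x) = 0 := by
    intro j hj; rw [hF j hj]; simp
  calc eulerD h x = x • deriv h x := by rw [eulerD, Complex.real_smul]
    _ = ∑ j ∈ Finset.range K,
        ((Real.log x) ^ j • (M (F j)) x + (((j:ℝ) * (Real.log x) ^ (j-1)) • F j x)) := by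
        rw [hdh, Finset.smul_sum]
        refine Finset.sum_congr rfl fun j _ => ?_
        rw [smul_add, M_apply, smul_comm x ((Real.log x)^j), smul_smul x]
        congr 2
        field_simp
    _ = (∑ j ∈ Finset.range K, (Real.log x) ^ j • (M (F j)) x)
        + ∑ j ∈ Finset.range K, (((j:ℝ) * (Real.log x) ^ (j-1)) • F j x) :=
        Finset.sum_add_distrib
    _ = ∑ j ∈ Finset.range K, (Real.log x) ^ j • (((j:ℝ) + 1) • F (j+1) + M (F j)) x := by
        rw [Finset.sum_congr rfl (fun (j : ℕ) _ =>
            show (Real.log x) ^ j • (((j:ℝ) + 1) • F (j+1) + M (F j)) x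
            = (Real.log x) ^ j • (((j:ℝ) + 1) • F (j+1) x) + (Real.log x) ^ j • (M (F j)) x by
          rw [SchwartzMap.add_apply, SchwartzMap.smul_apply, smul_add]),
          Finset.sum_add_distrib, add_comm]
        congr 1
        have e1 : ∑ j ∈ Finset.range K, (((j:ℝ) * (Real.log x) ^ (j-1)) • F j x)
            = ∑ j ∈ Finset.range (K+1), (((j:ℝ) * (Real.log x) ^ (j-1)) • F j x) := by
          rw [Finset.sum_range_succ, hB0 K le_rfl, add_zero]
        rw [e1, Finset.sum_range_succ']
        simp only [Nat.cast_zero, zero_mul, zero_smul, add_zero]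
        refine Finset.sum_congr rfl fun i _ => ?_
        rw [smul_smul]
        push_cast
        rw [mul_comm]

lemma exists_rep (n : ℕ) (h : ℝ → ℂ) (K : ℕ) (F : ℕ → SchwartzMap ℝ ℂ)
    (hF : ∀ j, K ≤ j → F j = 0)
    (hh : ∀ x ∈ Ioi (0:ℝ), h x = ∑ j ∈ Finset.range K, (Real.log x) ^ j • F j x) :
    ∃ G : ℕ → SchwartzMap ℝ ℂ, (∀ j, K ≤ j → G j = 0) ∧
      ∀ x ∈ Ioi (0:ℝ), (eulerD^[n] h) x = ∑ j ∈ Finset.range K, (Real.log x) ^ j • G j x := by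
  induction n generalizing h F with
  | zero => exact ⟨F, hF, hh⟩
  | succ n ih =>
    have hzero : ∀ j, K ≤ j → (((j:ℝ) + 1) • F (j+1) + M (F j)) = 0 := by
      intro j hj
      rw [hF (j+1) (hj.trans (Nat.le_succ j)), hF j hj, M_zero, smul_zero, add_zero]
    obtain ⟨G, hG0, hG⟩ := ih (eulerD h)
      (fun j => ((j:ℝ) + 1) • F (j+1) + M (F j)) hzero (step h K F hF hh)
    refine ⟨G, hG0, fun x hx => ?_⟩
    rw [Function.iterate_succ_apply]
    exact hG x hx

end EulerAux

/-- For a Schwartz function `f : ℝ → ℂ`, `ε > 0` and naturals `n, k`, setting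
`g x = (log x)^k • f x`, the function `x ↦ x^(ε-1) • (Dⁿ g) x` is integrable on `(0, ∞)`, where
`D` is the Euler operator `D h (x) = x * h'(x)` and `Dⁿ` its `n`-fold iterate. -/
theorem integrable_rpow_smul_eulerD_iterate_log_pow_smul_schwartz
    (f : SchwartzMap ℝ ℂ) (ε : ℝ) (hε : 0 < ε) (n k : ℕ) :
    IntegrableOn
      (fun x : ℝ => x ^ (ε - 1) •
        (eulerD^[n] (fun x : ℝ => (Real.log x) ^ k • f x)) x)
      (Set.Ioi 0) := by
  classical
  set F0 : ℕ → SchwartzMap ℝ ℂ := fun j => if j = k then f else 0 with hF0def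
  have hF0 : ∀ j, k + 1 ≤ j → F0 j = 0 := by
    intro j hj
    simp only [hF0def, if_neg (by omega : j ≠ k)]
  have hg : ∀ x ∈ Set.Ioi (0:ℝ), (fun x : ℝ => (Real.log x) ^ k • f x) x
      = ∑ j ∈ Finset.range (k+1), (Real.log x) ^ j • F0 j x := by
    intro x _
    rw [Finset.sum_eq_single k]
    · simp [hF0def]
    · intro j _ hj
      simp [hF0def, if_neg hj]
    · intro hk
      exact absurd (Finset.self_mem_range_succ k) hk
  obtain ⟨G, -, hG⟩ := EulerAux.exists_rep n _ (k+1) F0 hF0 hg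
  have hInt : IntegrableOn
      (fun x : ℝ => ∑ j ∈ Finset.range (k+1), x ^ (ε - 1) • ((Real.log x) ^ j • G j x))
      (Set.Ioi 0) :=
    integrable_finset_sum _ fun j _ => EulerAux.key (G j) hε j
  refine hInt.congr_fun (fun x hx => ?_) measurableSet_Ioi
  rw [hG x hx, Finset.smul_sum]
end

section
/- Let f : ℝ → ℂ be a Schwartz function, let n, k be nonnegative integers, and let s ∈ ℂ with Re(s) > 0. Set g(x) = (log x)^k f(x) on (0,∞) and let D^n g denote the n-fold application of the Euler operator D h (x) = x h′(x). Then s^n · (d/ds)^k f̃(s) = (−1)^n ∫_0^∞ (D^n g)(x) x^{s−1} dx, where f̃(s) = ∫_0^∞ f(x) x^{s−1} dx is the Mellin transform of f; in particular |s^n (d/ds)^k f̃(s)| = |∫_0^∞ (D^n g)(x) x^{s−1} dx|. -/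
open MeasureTheory Complex

namespace Statement4

open Real Filter Asymptotics Set Topology


open Real Filter Asymptotics Set Topology

/-- `x • φ'(x)` as a Schwartz map. -/
noncomputable def xMulDeriv (φ : SchwartzMap ℝ ℂ) : SchwartzMap ℝ ℂ :=
  SchwartzMap.bilinLeftCLM ((ContinuousLinearMap.lsmul ℝ ℝ : ℝ →L[ℝ] ℂ →L[ℝ] ℂ).flip)
    (ContinuousLinearMap.id ℝ ℝ).hasTemperateGrowth (SchwartzMap.derivCLM ℝ ℂ φ)

lemma xMulDeriv_apply (φ : SchwartzMap ℝ ℂ) (x : ℝ) :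
    xMulDeriv φ x = (x : ℂ) * deriv (⇑φ) x := by
  simp [xMulDeriv, SchwartzMap.derivCLM_apply, real_smul]

/-- The class of finite sums of `(log x)^j * φ x` with `φ` Schwartz. -/
inductive LS : (ℝ → ℂ) → Prop where
  | elem (j : ℕ) (φ : SchwartzMap ℝ ℂ) : LS (fun x => (Real.log x : ℂ) ^ j * φ x)
  | add {g₁ g₂ : ℝ → ℂ} : LS g₁ → LS g₂ → LS (fun x => g₁ x + g₂ x)

lemma LS.congr {h₁ h₂ : ℝ → ℂ} (hl : LS h₁) (he : ∀ x, h₁ x = h₂ x) : LS h₂ := by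
  have : h₁ = h₂ := funext he
  exact this ▸ hl

lemma LS.continuousOn {h : ℝ → ℂ} (hl : LS h) : ContinuousOn h (Ioi (0:ℝ)) := by
  induction hl with
  | elem j φ =>
      exact ((Complex.continuous_ofReal.comp_continuousOn
        (Real.continuousOn_log.mono (fun x hx => ne_of_gt hx))).pow j).mul
        φ.continuous.continuousOn
  | add h₁ h₂ ih₁ ih₂ => exact ih₁.add ih₂

lemma LS.locInt {h : ℝ → ℂ} (hl : LS h) : LocallyIntegrableOn h (Ioi (0:ℝ)) :=
  hl.continuousOn.locallyIntegrableOn measurableSet_Ioi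

lemma logpow_isBigO_zero (j : ℕ) {b : ℝ} (hb : 0 < b) :
    (fun x : ℝ => (Real.log x) ^ j) =O[𝓝[>] (0:ℝ)] (fun x => x ^ (-b)) := by
  rcases Nat.eq_zero_or_pos j with hj | hj
  · subst hj
    simp only [pow_zero]
    refine IsBigO.of_bound 1 ?_
    filter_upwards [Ioo_mem_nhdsGT_of_mem (show (0:ℝ) ∈ Ico (0:ℝ) 1 by constructor <;> norm_num)]
      with x hx
    rw [norm_one, one_mul, Real.norm_eq_abs, _root_.abs_of_nonneg (Real.rpow_nonneg hx.1.le _)]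
    exact Real.one_le_rpow_of_pos_of_le_one_of_nonpos hx.1 hx.2.le (by linarith)
  · have h := (isLittleO_log_rpow_nhdsGT_zero (r := -b / j)
      (div_neg_of_neg_of_pos (neg_neg_iff_pos.mpr hb) (by exact_mod_cast hj))).isBigO
    refine (h.pow j).congr' (Eventually.of_forall fun x => rfl) ?_
    filter_upwards [self_mem_nhdsWithin] with x (hx : (0:ℝ) < x)
    rw [← Real.rpow_natCast (x ^ (-b / (j:ℝ))) j, ← Real.rpow_mul hx.le]
    congr 1
    field_simp

lemma logpow_isBigO_top (j : ℕ) :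
    (fun x : ℝ => (Real.log x) ^ j) =O[atTop] (fun x => x ^ (j:ℝ)) := by
  have h := ((isLittleO_log_rpow_atTop one_pos).isBigO.pow j)
  refine h.congr' (Eventually.of_forall fun x => rfl) ?_
  filter_upwards [eventually_ge_atTop (0:ℝ)] with x hx
  rw [Real.rpow_one, ← Real.rpow_natCast x j]

lemma LS.isBigO_zero {h : ℝ → ℂ} (hl : LS h) {b : ℝ} (hb : 0 < b) :
    h =O[𝓝[>] (0:ℝ)] (fun x => x ^ (-b)) := by
  induction hl with
  | elem j φ =>
      have h1 : (fun x : ℝ => ((Real.log x : ℂ)) ^ j) =O[𝓝[>] (0:ℝ)] (fun x => x ^ (-b)) := by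
        have := (logpow_isBigO_zero j hb)
        rw [← Complex.isBigO_ofReal_left (l := 𝓝[>] (0:ℝ)) (E := ℝ)] at this
        refine this.congr_left fun x => ?_
        push_cast; ring
      have h2 : (⇑φ) =O[𝓝[>] (0:ℝ)] (fun _ : ℝ => (1:ℝ)) := by
        obtain ⟨C, hC⟩ := φ.decay 0 0
        refine IsBigO.of_bound C ?_
        filter_upwards with x
        simpa using hC.2 x
      have := h1.mul h2
      refine this.congr' (Eventually.of_forall fun x => rfl) ?_
      filter_upwards with x
      rw [mul_one]
  | add h₁ h₂ ih₁ ih₂ => exact ih₁.add ih₂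

lemma LS.isBigO_top {h : ℝ → ℂ} (hl : LS h) (a : ℝ) :
    h =O[atTop] (fun x => x ^ (-a)) := by
  induction hl with
  | elem j φ =>
      have h1 : (fun x : ℝ => ((Real.log x : ℂ)) ^ j) =O[atTop] (fun x => x ^ (j:ℝ)) := by
        have := logpow_isBigO_top j
        rw [← Complex.isBigO_ofReal_left (l := atTop) (E := ℝ)] at this
        refine this.congr_left fun x => ?_
        push_cast; ring
      have h2 : (⇑φ) =O[atTop] (fun x : ℝ => x ^ (-(a + j))) := by
        refine ((φ.isBigO_cocompact_rpow (-(a+j))).mono _root_.atTop_le_cocompact).congr'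
          (Eventually.of_forall fun x => rfl) ?_
        filter_upwards [eventually_ge_atTop (0:ℝ)] with x hx
        rw [Real.norm_eq_abs, _root_.abs_of_nonneg hx]
      refine (h1.mul h2).congr' (Eventually.of_forall fun x => rfl) ?_
      filter_upwards [eventually_gt_atTop (0:ℝ)] with x hx
      rw [← Real.rpow_add hx]
      congr 1; ring
  | add h₁ h₂ ih₁ ih₂ => exact ih₁.add ih₂

lemma LS.mellinConv {h : ℝ → ℂ} (hl : LS h) {s : ℂ} (hs : 0 < s.re) :
    IntegrableOn (fun x : ℝ => h x * (x:ℂ) ^ (s - 1)) (Ioi (0:ℝ)) := by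
  have h2 : IntegrableOn (fun t : ℝ => (t:ℂ) ^ (s-1) • h t) (Ioi (0:ℝ)) :=
    mellinConvergent_of_isBigO_rpow (a := s.re + 1) (b := s.re / 2) hl.locInt
      (hl.isBigO_top _) (by linarith) (hl.isBigO_zero (by linarith)) (by linarith)
  refine h2.congr_fun (fun x _ => ?_) measurableSet_Ioi
  simp [mul_comm]

lemma LS.log_mul {h : ℝ → ℂ} (hl : LS h) : LS (fun x => (Real.log x : ℂ) * h x) := by
  induction hl with
  | elem j φ =>
      exact (LS.elem (j+1) φ).congr fun x => by rw [pow_succ']; ring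
  | add h₁ h₂ ih₁ ih₂ =>
      exact (ih₁.add ih₂).congr fun x => by ring

lemma LS.logpow_mul {h : ℝ → ℂ} (hl : LS h) (k : ℕ) :
    LS (fun x => (Real.log x : ℂ) ^ k * h x) := by
  induction k with
  | zero => exact hl.congr fun x => by simp
  | succ k ih => exact ih.log_mul.congr fun x => by rw [pow_succ']; ring

lemma LS.mellin_hasDerivAt {h : ℝ → ℂ} (hl : LS h) {s : ℂ} (hs : 0 < s.re) :
    HasDerivAt (mellin h) (mellin (fun x => (Real.log x : ℂ) * h x) s) s := by
  have h2 := (mellin_hasDerivAt_of_isBigO_rpow (a := s.re + 1) (b := s.re / 2) hl.locInt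
    (hl.isBigO_top _) (by linarith) (hl.isBigO_zero (by linarith)) (by linarith)).2
  have e : (fun t : ℝ => Real.log t • h t) = (fun x : ℝ => (Real.log x : ℂ) * h x) :=
    funext fun t => real_smul
  rwa [e] at h2

lemma LS.iteratedDeriv_mellin {h : ℝ → ℂ} (hl : LS h) (k : ℕ) {s : ℂ} (hs : 0 < s.re) :
    iteratedDeriv k (mellin h) s = mellin (fun x => (Real.log x : ℂ) ^ k * h x) s := by
  induction k generalizing s with
  | zero =>
      simp only [iteratedDeriv_zero]
      congr 1; funext x; simp
  | succ k ih =>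
      rw [iteratedDeriv_succ]
      have hev : (iteratedDeriv k (mellin h)) =ᶠ[𝓝 s]
          (mellin (fun x => (Real.log x : ℂ) ^ k * h x)) := by
        have hopen : IsOpen {z : ℂ | 0 < z.re} := isOpen_lt continuous_const Complex.continuous_re
        filter_upwards [hopen.mem_nhds (by exact hs)] with z hz
        exact ih hz
      rw [hev.deriv_eq]
      rw [((hl.logpow_mul k).mellin_hasDerivAt hs).deriv]
      congr 1; funext x; rw [pow_succ']; ring

lemma LS.exists_eulerD {h : ℝ → ℂ} (hl : LS h) :
    ∃ g : ℝ → ℂ, LS g ∧ ∀ x : ℝ, 0 < x → HasDerivAt h (((x:ℝ):ℂ)⁻¹ * g x) x := by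
  induction hl with
  | elem j φ =>
      refine ⟨fun x => (Real.log x : ℂ) ^ (j-1) * ((j:ℂ) • φ) x
          + (Real.log x : ℂ) ^ j * (xMulDeriv φ) x,
        (LS.elem (j-1) ((j:ℂ) • φ)).add (LS.elem j (xMulDeriv φ)), fun x hx => ?_⟩
      have hlog : HasDerivAt (fun y : ℝ => (Real.log y : ℂ)) (((x⁻¹ : ℝ) : ℂ)) x :=
        (Real.hasDerivAt_log hx.ne').ofReal_comp
      have hpow : HasDerivAt (fun y : ℝ => (Real.log y : ℂ) ^ j)
          (((j:ℂ) * (Real.log x : ℂ) ^ (j-1)) * ((x⁻¹ : ℝ) : ℂ)) x :=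
        (hasDerivAt_pow j ((Real.log x : ℂ))).comp x hlog
      have hφ : HasDerivAt (⇑φ) (deriv (⇑φ) x) x := (φ.differentiable x).hasDerivAt
      have hmul := hpow.mul hφ
      convert! hmul using 1
      have hx0 : ((x:ℝ):ℂ) ≠ 0 := Complex.ofReal_ne_zero.mpr hx.ne'
      simp only [SchwartzMap.smul_apply, xMulDeriv_apply, smul_eq_mul]
      push_cast
      field_simp
  | add h₁ h₂ ih₁ ih₂ =>
      obtain ⟨g₁, hg₁, hd₁⟩ := ih₁
      obtain ⟨g₂, hg₂, hd₂⟩ := ih₂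
      refine ⟨fun x => g₁ x + g₂ x, hg₁.add hg₂, fun x hx => ?_⟩
      have := (hd₁ x hx).add (hd₂ x hx)
      convert! this using 1
      ring

lemma integral_Ioi_deriv_eq_zero {F f' : ℝ → ℂ}
    (hd : ∀ x : ℝ, 0 < x → HasDerivAt F (f' x) x)
    (hi : IntegrableOn f' (Ioi (0:ℝ)))
    (h0 : Tendsto F (𝓝[>] (0:ℝ)) (𝓝 0)) (hT : Tendsto F atTop (𝓝 0)) :
    ∫ x in Ioi (0:ℝ), f' x = 0 := by
  set a : ℕ → ℝ := fun n => ((n:ℝ)+1)⁻¹ with ha_def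
  set b : ℕ → ℝ := fun n => (n:ℝ)+1 with hb_def
  have ha_pos : ∀ n, 0 < a n := fun n => by positivity
  have hab : ∀ n, a n ≤ b n := fun n => by
    have h1 : a n ≤ 1 := by
      rw [ha_def]
      simp only
      rw [inv_le_one_iff₀]
      right; linarith [Nat.cast_nonneg (α := ℝ) n]
    have h2 : (1:ℝ) ≤ b n := by
      rw [hb_def]
      simp only
      linarith [Nat.cast_nonneg (α := ℝ) n]
    linarith
  have hsub : ∀ n, uIcc (a n) (b n) ⊆ Ioi (0:ℝ) := fun n => by
    rw [uIcc_of_le (hab n)]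
    intro x hx
    exact lt_of_lt_of_le (ha_pos n) hx.1
  have step1 : ∀ n, ∫ x in (a n)..(b n), f' x = F (b n) - F (a n) := fun n => by
    refine intervalIntegral.integral_eq_sub_of_hasDerivAt (fun x hx => hd x (hsub n hx)) ?_
    exact (hi.mono_set (hsub n)).intervalIntegrable
  have hbT : Tendsto b atTop atTop := by
    apply tendsto_atTop_add_const_right
    exact tendsto_natCast_atTop_atTop
  have ha0 : Tendsto a atTop (𝓝 0) := by
    have : Tendsto (fun n : ℕ => ((n:ℝ)+1)⁻¹) atTop (𝓝 0) := by
      apply tendsto_inv_atTop_zero.comp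
      apply tendsto_atTop_add_const_right
      exact tendsto_natCast_atTop_atTop
    exact this
  have ha0' : Tendsto a atTop (𝓝[>] (0:ℝ)) := by
    rw [tendsto_nhdsWithin_iff]
    exact ⟨ha0, Eventually.of_forall fun n => ha_pos n⟩
  have step2 : Tendsto (fun n => F (b n) - F (a n)) atTop (𝓝 0) := by
    have := (hT.comp hbT).sub (h0.comp ha0')
    simpa using this
  have cover : AECover (volume.restrict (Ioi (0:ℝ))) atTop (fun n => Ioc (a n) (b n)) := by
    constructor
    · filter_upwards [ae_restrict_mem measurableSet_Ioi] with x (hx : (0:ℝ) < x)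
      filter_upwards [ha0.eventually_lt_const hx, hbT.eventually_ge_atTop x] with n h1 h2
      exact ⟨h1, h2⟩
    · exact fun n => measurableSet_Ioc
  have step3 : Tendsto (fun n => ∫ x in (a n)..(b n), f' x) atTop
      (𝓝 (∫ x in Ioi (0:ℝ), f' x)) := by
    have h4 := cover.integral_tendsto_of_countably_generated (f := f') hi
    refine h4.congr fun n => ?_
    rw [intervalIntegral.integral_of_le (hab n)]
    rw [Measure.restrict_restrict measurableSet_Ioc,
      inter_eq_left.mpr (show Ioc (a n) (b n) ⊆ Ioi (0:ℝ) from
        fun x hx => lt_of_lt_of_le (ha_pos n) hx.1.le)]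
  have step3' : Tendsto (fun n => F (b n) - F (a n)) atTop
      (𝓝 (∫ x in Ioi (0:ℝ), f' x)) := Tendsto.congr (fun n => step1 n) step3
  exact tendsto_nhds_unique step3' step2

lemma LS.tendsto_cpow_top {h : ℝ → ℂ} (hl : LS h) {s : ℂ} (hs : 0 < s.re) :
    Tendsto (fun x : ℝ => h x * ((x:ℝ):ℂ) ^ s) atTop (𝓝 0) := by
  have hOc : (fun x : ℝ => ((x:ℝ):ℂ) ^ s) =O[atTop] (fun x => x ^ s.re) := by
    refine IsBigO.of_bound 1 ?_
    filter_upwards [eventually_gt_atTop (0:ℝ)] with x hx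
    rw [one_mul, Complex.norm_cpow_eq_rpow_re_of_pos hx,
      Real.norm_eq_abs, _root_.abs_of_nonneg (Real.rpow_nonneg hx.le _)]
  have hO := (hl.isBigO_top (s.re + 1)).mul hOc
  have hO2 : (fun x : ℝ => h x * ((x:ℝ):ℂ) ^ s) =O[atTop] (fun x : ℝ => x ^ (-(1:ℝ))) := by
    refine hO.congr' (Eventually.of_forall fun x => rfl) ?_
    filter_upwards [eventually_gt_atTop (0:ℝ)] with x hx
    rw [← Real.rpow_add hx]; congr 1; ring
  exact hO2.trans_tendsto (tendsto_rpow_neg_atTop one_pos)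

lemma LS.tendsto_cpow_zero {h : ℝ → ℂ} (hl : LS h) {s : ℂ} (hs : 0 < s.re) :
    Tendsto (fun x : ℝ => h x * ((x:ℝ):ℂ) ^ s) (𝓝[>] (0:ℝ)) (𝓝 0) := by
  have hOc : (fun x : ℝ => ((x:ℝ):ℂ) ^ s) =O[𝓝[>] (0:ℝ)] (fun x => x ^ s.re) := by
    refine IsBigO.of_bound 1 ?_
    filter_upwards [self_mem_nhdsWithin] with x (hx : (0:ℝ) < x)
    rw [one_mul, Complex.norm_cpow_eq_rpow_re_of_pos hx,
      Real.norm_eq_abs, _root_.abs_of_nonneg (Real.rpow_nonneg hx.le _)]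
  have hO := (hl.isBigO_zero (half_pos hs)).mul hOc
  have hO2 : (fun x : ℝ => h x * ((x:ℝ):ℂ) ^ s) =O[𝓝[>] (0:ℝ)]
      (fun x : ℝ => x ^ (s.re / 2)) := by
    refine hO.congr' (Eventually.of_forall fun x => rfl) ?_
    filter_upwards [self_mem_nhdsWithin] with x (hx : (0:ℝ) < x)
    rw [← Real.rpow_add hx]; congr 1; ring
  refine hO2.trans_tendsto ?_
  have c := (Real.continuousAt_rpow_const 0 (s.re / 2) (Or.inr (half_pos hs).le)).tendsto
  rw [Real.zero_rpow (ne_of_gt (half_pos hs))] at c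
  exact c.mono_left nhdsWithin_le_nhds

lemma LS.integral_euler {h g : ℝ → ℂ} (hl : LS h) (hg : LS g)
    (hder : ∀ x : ℝ, 0 < x → HasDerivAt h (((x:ℝ):ℂ)⁻¹ * g x) x) {s : ℂ} (hs : 0 < s.re) :
    ∫ x in Ioi (0:ℝ), g x * ((x:ℝ):ℂ) ^ (s-1)
      = -s * ∫ x in Ioi (0:ℝ), h x * ((x:ℝ):ℂ) ^ (s-1) := by
  have hs0 : s ≠ 0 := fun h0 => by simp [h0] at hs
  have hd : ∀ x : ℝ, 0 < x → HasDerivAt (fun x : ℝ => h x * ((x:ℝ):ℂ) ^ s)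
      (g x * ((x:ℝ):ℂ) ^ (s-1) + s * (h x * ((x:ℝ):ℂ) ^ (s-1))) x := by
    intro x hx
    have hx0 : ((x:ℝ):ℂ) ≠ 0 := Complex.ofReal_ne_zero.mpr hx.ne'
    have hc : HasDerivAt (fun y : ℝ => ((y:ℝ):ℂ) ^ s) (s * ((x:ℝ):ℂ) ^ (s-1)) x := by
      have h1 := hasDerivAt_ofReal_cpow_const' hx.ne' (r := s - 1) (by
        intro hcon
        apply hs0
        have := congrArg (· + 1) hcon
        simpa using this)
      have h2 := h1.const_mul s
      simp only [sub_add_cancel] at h2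
      have e : (fun y : ℝ => s * (((y:ℝ):ℂ) ^ s / s)) = fun y : ℝ => ((y:ℝ):ℂ) ^ s :=
        funext fun y => by field_simp
      rwa [e] at h2
    have hmul := (hder x hx).mul hc
    convert! hmul using 1
    rw [Complex.cpow_sub _ _ hx0, Complex.cpow_one]
    field_simp
  have hig : IntegrableOn (fun x : ℝ => g x * ((x:ℝ):ℂ) ^ (s-1)) (Ioi (0:ℝ)) :=
    hg.mellinConv hs
  have hih : IntegrableOn (fun x : ℝ => s * (h x * ((x:ℝ):ℂ) ^ (s-1))) (Ioi (0:ℝ)) :=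
    (hl.mellinConv hs).const_mul s
  have hzero := integral_Ioi_deriv_eq_zero hd (hig.add hih)
    (hl.tendsto_cpow_zero hs) (hl.tendsto_cpow_top hs)
  rw [integral_add hig hih, integral_const_mul] at hzero
  linear_combination hzero

lemma LS.euler_iterate {h : ℝ → ℂ} (hl : LS h) {s : ℂ} (hs : 0 < s.re) (n : ℕ) :
    ∃ g : ℝ → ℂ, LS g ∧ (∀ x ∈ Ioi (0:ℝ), eulerD^[n] h x = g x) ∧
      ∫ x in Ioi (0:ℝ), g x * ((x:ℝ):ℂ) ^ (s-1)
        = (-s) ^ n * ∫ x in Ioi (0:ℝ), h x * ((x:ℝ):ℂ) ^ (s-1) := by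
  induction n with
  | zero => exact ⟨h, hl, fun x _ => rfl, by simp⟩
  | succ n ih =>
      obtain ⟨g, hgLS, hge, hgi⟩ := ih
      obtain ⟨g', hg'LS, hd⟩ := hgLS.exists_eulerD
      refine ⟨g', hg'LS, fun x hx => ?_, ?_⟩
      · rw [Function.iterate_succ_apply']
        have hx' : (0:ℝ) < x := hx
        have hev : (eulerD^[n] h) =ᶠ[𝓝 x] g := by
          filter_upwards [isOpen_Ioi.mem_nhds hx] with y hy
          exact hge y hy
        show ((x:ℝ):ℂ) * deriv (eulerD^[n] h) x = g' x
        rw [hev.deriv_eq, (hd x hx').deriv, ← mul_assoc,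
          mul_inv_cancel₀ (Complex.ofReal_ne_zero.mpr hx'.ne'), one_mul]
      · rw [hgLS.integral_euler hg'LS hd hs, hgi, pow_succ]
        ring

end Statement4

open Statement4 in
/-- For a Schwartz function `f : ℝ → ℂ`, naturals `n, k`, and `s ∈ ℂ` with
`Re s > 0`, setting `g x = (log x)^k * f x`, one has
`s^n * (d/ds)^k f̃(s) = (-1)^n * ∫_0^∞ (Dⁿ g)(x) x^(s-1) dx`, where `f̃ = mellin f`; in
particular `|s^n (d/ds)^k f̃(s)| = |∫_0^∞ (Dⁿ g)(x) x^(s-1) dx|`. -/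
theorem pow_mul_iteratedDeriv_mellin_eq_mellin_eulerD_iterate
    (f : SchwartzMap ℝ ℂ) (n k : ℕ) (s : ℂ) (hs : 0 < s.re) :
    s ^ n * iteratedDeriv k (mellin (⇑f)) s
      = (-1 : ℂ) ^ n *
        ∫ x in Set.Ioi (0 : ℝ),
          (eulerD^[n] (fun x : ℝ => (Real.log x : ℂ) ^ k * f x)) x * (x : ℂ) ^ (s - 1) ∧
    ‖s ^ n * iteratedDeriv k (mellin (⇑f)) s‖
      = ‖∫ x in Set.Ioi (0 : ℝ),
          (eulerD^[n] (fun x : ℝ => (Real.log x : ℂ) ^ k * f x)) x * (x : ℂ) ^ (s - 1)‖ := by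

  have hg0 : LS (fun x : ℝ => (Real.log x : ℂ) ^ k * f x) := LS.elem k f
  obtain ⟨g, hgLS, hge, hgi⟩ := hg0.euler_iterate hs n
  have hmel : iteratedDeriv k (mellin (⇑f)) s
      = ∫ x in Set.Ioi (0:ℝ), ((Real.log x : ℂ) ^ k * f x) * (x:ℂ) ^ (s-1) := by
    have e : mellin (⇑f) = mellin (fun x : ℝ => (Real.log x : ℂ) ^ 0 * f x) := by
      congr 1; funext x; simp
    rw [e, (LS.elem 0 f).iteratedDeriv_mellin k hs]
    rw [mellin]
    refine setIntegral_congr_fun measurableSet_Ioi fun x hx => ?_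
    rw [smul_eq_mul, pow_zero]
    ring
  have heq : (∫ x in Set.Ioi (0:ℝ),
        (eulerD^[n] (fun x : ℝ => (Real.log x : ℂ) ^ k * f x)) x * (x:ℂ) ^ (s-1))
      = ∫ x in Set.Ioi (0:ℝ), g x * (x:ℂ) ^ (s-1) :=
    setIntegral_congr_fun measurableSet_Ioi fun x hx => by rw [hge x hx]
  have main : s ^ n * iteratedDeriv k (mellin (⇑f)) s
      = (-1 : ℂ) ^ n *
        ∫ x in Set.Ioi (0:ℝ),
          (eulerD^[n] (fun x : ℝ => (Real.log x : ℂ) ^ k * f x)) x * (x:ℂ) ^ (s-1) := by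
    rw [hmel, heq, hgi, neg_pow]
    ring_nf
    rw [mul_comm n 2, pow_mul]
    norm_num
  refine ⟨main, ?_⟩
  rw [main, norm_mul, norm_pow, norm_neg, norm_one, one_pow, one_mul]
end
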